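/- Let R be an integral domain in which every nonzero proper ideal is a finite product of molecules, and let I be a nonzero proper unit-cancellative ideal of R that is divisible by only finitely many molecules. Then I is divisible by only finitely many ideals of R (where J divides I means I = JK for some ideal K). -/

import Mathlib

/-- In a molecular domain, a nonzero proper unit-cancellative ideal divisible
by only finitely many molecules is divisible by only finitely many ideals. -/
theorem stmt_14 {R : Type*} [CommRing R] [IsDomain R]
    (hmolec : ∀ I : Ideal R, I ≠ ⊥ → I ≠ ⊤ →
      ∃ s : Multiset (Ideal R),
        (∀ J ∈ s, J ≠ ⊥ ∧ J ≠ ⊤ ∧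
          ∀ A B : Ideal R, J = A * B → A = ⊤ ∨ B = ⊤) ∧ I = s.prod)
    (I : Ideal R) (hne : I ≠ ⊥) (hproper : I ≠ ⊤)
    (hcanc : ∀ J : Ideal R, I = I * J → J = ⊤)
    (hfinmol : {J : Ideal R |
      (J ≠ ⊥ ∧ J ≠ ⊤ ∧ ∀ A B : Ideal R, J = A * B → A = ⊤ ∨ B = ⊤) ∧
        ∃ K : Ideal R, I = J * K}.Finite) :
    {J : Ideal R | ∃ K : Ideal R, I = J * K}.Finite := by
  classical
  set Mol : Set (Ideal R) := {J : Ideal R |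
      (J ≠ ⊥ ∧ J ≠ ⊤ ∧ ∀ A B : Ideal R, J = A * B → A = ⊤ ∨ B = ⊤) ∧
        ∃ K : Ideal R, I = J * K} with hMolDef
  -- E : molecularizations of I
  set E : Set (Multiset (Ideal R)) :=
    {s | (∀ J ∈ s, J ≠ ⊥ ∧ J ≠ ⊤ ∧
        ∀ A B : Ideal R, J = A * B → A = ⊤ ∨ B = ⊤) ∧ I = s.prod} with hEdef
  -- every element of a molecularization of I is a molecule dividing I
  have hmemMol : ∀ s ∈ E, ∀ J ∈ s, J ∈ Mol := by
    intro s hs J hJ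
    obtain ⟨u, hu⟩ := Multiset.exists_cons_of_mem hJ
    refine ⟨hs.1 J hJ, ⟨u.prod, ?_⟩⟩
    rw [hs.2, hu, Multiset.prod_cons]
  -- E is an antichain
  have hanti : ∀ s ∈ E, ∀ t ∈ E, s ≤ t → s = t := by
    intro s hs t ht hle
    by_contra hne'
    have hsub : t - s ≠ 0 := by
      intro h0
      exact hne' (le_antisymm hle (tsub_eq_zero_iff_le.mp h0))
    have hprod : I = I * (t - s).prod := by
      have : s + (t - s) = t := add_tsub_cancel_of_le hle
      calc I = t.prod := ht.2
        _ = (s + (t - s)).prod := by rw [this]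
        _ = s.prod * (t - s).prod := Multiset.prod_add _ _
        _ = I * (t - s).prod := by rw [← hs.2]
    have htop : (t - s).prod = ⊤ := hcanc _ hprod
    obtain ⟨J, hJ⟩ := Multiset.exists_mem_of_ne_zero hsub
    obtain ⟨u, hu⟩ := Multiset.exists_cons_of_mem hJ
    have hJt : J ∈ t := Multiset.mem_of_le (tsub_le_self) hJ
    have hJtop : J = ⊤ := by
      have h1 : (t - s).prod ≤ J := by
        rw [hu, Multiset.prod_cons]; exact Ideal.mul_le_left
      rw [htop] at h1
      exact top_le_iff.mp h1
    exact (ht.1 J hJt).2.1 hJtop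
  -- E is finite, by Dickson's lemma
  have hEfin : E.Finite := by
    set M : Finset (Ideal R) := hfinmol.toFinset with hMdef
    have hmolM : ∀ s ∈ E, ∀ J ∈ s, J ∈ M := by
      intro s hs J hJ
      simpa [hMdef] using hmemMol s hs J hJ
    set φ : Multiset (Ideal R) → ({x // x ∈ M} → ℕ) :=
      fun s m => s.count m.1 with hφdef
    have hinj : Set.InjOn φ E := by
      intro s hs t ht heq
      ext a
      by_cases ha : a ∈ M
      · exact congrFun heq ⟨a, ha⟩
      · have h1 : a ∉ s := fun h => ha (hmolM s hs a h)
        have h2 : a ∉ t := fun h => ha (hmolM t ht a h)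
        rw [Multiset.count_eq_zero_of_notMem h1, Multiset.count_eq_zero_of_notMem h2]
    have himg : IsAntichain (· ≤ ·) (φ '' E) := by
      rintro _ ⟨s, hs, rfl⟩ _ ⟨t, ht, rfl⟩ hne2 hle
      have hst : s ≤ t := by
        rw [Multiset.le_iff_count]
        intro a
        by_cases ha : a ∈ M
        · exact hle ⟨a, ha⟩
        · have h1 : a ∉ s := fun h => ha (hmolM s hs a h)
          rw [Multiset.count_eq_zero_of_notMem h1]; exact Nat.zero_le _
      exact hne2 (by rw [hanti s hs t ht hst])
    have hfin : (φ '' E).Finite :=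
      himg.finite_of_partiallyWellOrderedOn
        (Set.isPWO_of_wellQuasiOrderedLE _)
    exact Set.Finite.of_finite_image hfin hinj
  -- the set of divisors is contained in products of submultisets of elements of E
  obtain ⟨t₀, ht₀⟩ := hmolec I hne hproper
  have ht₀E : t₀ ∈ E := ht₀
  have hsubset : {J : Ideal R | ∃ K : Ideal R, I = J * K} ⊆
      ⋃ t ∈ E, (fun s : Multiset (Ideal R) => s.prod) '' {s | s ≤ t} := by
    rintro J ⟨K, hK⟩
    simp only [Set.mem_iUnion, Set.mem_image, Set.mem_setOf_eq]
    by_cases hJtop : J = ⊤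
    · exact ⟨t₀, ht₀E, 0, Multiset.zero_le _, by
        simp [hJtop, Ideal.one_eq_top]⟩
    by_cases hKtop : K = ⊤
    · refine ⟨t₀, ht₀E, t₀, le_refl _, ?_⟩
      rw [← ht₀.2, hK, hKtop, Ideal.mul_top]
    have hJbot : J ≠ ⊥ := by
      rintro rfl; rw [Submodule.bot_mul] at hK; exact hne hK
    have hKbot : K ≠ ⊥ := by
      rintro rfl; rw [Submodule.mul_bot] at hK; exact hne hK
    obtain ⟨sJ, hsJ⟩ := hmolec J hJbot hJtop
    obtain ⟨sK, hsK⟩ := hmolec K hKbot hKtop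
    refine ⟨sJ + sK, ⟨?_, ?_⟩, sJ, Multiset.le_add_right _ _, hsJ.2.symm⟩
    · intro X hX
      rcases Multiset.mem_add.mp hX with h | h
      · exact hsJ.1 X h
      · exact hsK.1 X h
    · rw [hK, hsJ.2, hsK.2, Multiset.prod_add]
  refine Set.Finite.subset ?_ hsubset
  refine Set.Finite.biUnion hEfin ?_
  intro t _
  have : ({s : Multiset (Ideal R) | s ≤ t}).Finite := by
    refine Set.Finite.ofFinset t.powerset.toFinset ?_
    intro s
    simp [Multiset.mem_powerset]
  exact this.image _
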